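/- Let A₁ ∈ ℂ^{m×n}, b₁ ∈ ℂ^m, A₂ ∈ ℂ^{k×n} with rank(A₂) = k ≥ 1, b₂ ∈ ℂ^k, and set ξ := A₁†b₁ + (I − (A₁(I − A₂†A₂))†A₁)(A₂†b₂ − A₁†b₁). For any y ∈ ℂ^n, define ψ(y) := ξ + P_{N(A₁)∩N(A₂)} y, where P_{N(A₁)∩N(A₂)} is the orthogonal projection onto N(A₁) ∩ N(A₂). Then ψ(y) minimizes ‖A₁x − b₁‖² over all x ∈ ℂ^n satisfying A₂x = b₂, and for every minimizer x of this constrained problem one has ‖ψ(y) − y‖ ≤ ‖x − y‖. -/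

import Mathlib

open Matrix

/-- The four Penrose conditions characterizing the Moore-Penrose inverse. -/
def IsMoorePenrose {m n : ℕ} (A : Matrix (Fin m) (Fin n) ℂ)
    (X : Matrix (Fin n) (Fin m) ℂ) : Prop :=
  A * X * A = A ∧ X * A * X = X ∧ (A * X)ᴴ = A * X ∧ (X * A)ᴴ = X * A

/-- The range (column space) of a matrix, as a subspace of Euclidean space. -/
noncomputable def mrange {m n : ℕ} (A : Matrix (Fin m) (Fin n) ℂ) :
    Submodule ℂ (EuclideanSpace ℂ (Fin m)) :=
  LinearMap.range (Matrix.toEuclideanLin A)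

/-- The null space of a matrix, as a subspace of Euclidean space. -/
noncomputable def mker {m n : ℕ} (A : Matrix (Fin m) (Fin n) ℂ) :
    Submodule ℂ (EuclideanSpace ℂ (Fin n)) :=
  LinearMap.ker (Matrix.toEuclideanLin A)

section Helpers

variable {a b c : ℕ}

private lemma Tmul (M : Matrix (Fin a) (Fin b) ℂ) (N : Matrix (Fin b) (Fin c) ℂ)
    (v : EuclideanSpace ℂ (Fin c)) :
    toEuclideanLin (M * N) v = toEuclideanLin M (toEuclideanLin N v) := by
  simp [Matrix.toEuclideanLin_apply, Matrix.mulVec_mulVec]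

private lemma Tsub (M N : Matrix (Fin a) (Fin b) ℂ) (v : EuclideanSpace ℂ (Fin b)) :
    toEuclideanLin (M - N) v = toEuclideanLin M v - toEuclideanLin N v := by
  simp [Matrix.toEuclideanLin_apply, Matrix.sub_mulVec]

private lemma Tone (v : EuclideanSpace ℂ (Fin a)) :
    toEuclideanLin (1 : Matrix (Fin a) (Fin a) ℂ) v = v := by
  simp [Matrix.toEuclideanLin_apply]

private lemma Tinner (M : Matrix (Fin a) (Fin b) ℂ) (u : EuclideanSpace ℂ (Fin b))
    (w : EuclideanSpace ℂ (Fin a)) :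
    inner ℂ (toEuclideanLin M u) w = (inner ℂ u (toEuclideanLin Mᴴ w) : ℂ) := by
  rw [Matrix.toEuclideanLin_conjTranspose_eq_adjoint]
  exact (LinearMap.adjoint_inner_right _ _ _).symm

private lemma Tinner' (M : Matrix (Fin a) (Fin b) ℂ) (u : EuclideanSpace ℂ (Fin b))
    (w : EuclideanSpace ℂ (Fin a)) :
    inner ℂ w (toEuclideanLin M u) = (inner ℂ (toEuclideanLin Mᴴ w) u : ℂ) := by
  rw [← conjTranspose_conjTranspose M, Tinner]; simp

private lemma surj_lemma {k n : ℕ} (A₂ : Matrix (Fin k) (Fin n) ℂ)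
    (A₂d : Matrix (Fin n) (Fin k) ℂ) (h : IsMoorePenrose A₂ A₂d) (hr : A₂.rank = k)
    (v : Fin k → ℂ) : (A₂ * A₂d) *ᵥ v = v := by
  set P := A₂ * A₂d with hP
  have hP2 : P * P = P := by
    rw [hP]
    rw [show A₂ * A₂d * (A₂ * A₂d) = A₂ * A₂d * A₂ * A₂d by simp [Matrix.mul_assoc], h.1]
  have hrk : P.rank = k := by
    have h1 : P.rank ≤ k := le_trans (Matrix.rank_le_card_width P) (by simp)
    have h2 : k ≤ P.rank := by
      calc k = A₂.rank := hr.symm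
      _ = (P * A₂).rank := by rw [hP, h.1]
      _ ≤ P.rank := Matrix.rank_mul_le_left P A₂
    omega
  have htop : LinearMap.range P.mulVecLin = ⊤ := by
    apply Submodule.eq_top_of_finrank_eq
    rw [← Matrix.rank, hrk]
    simp [Module.finrank_pi]
  obtain ⟨w, hw⟩ := (LinearMap.range_eq_top.mp htop) v
  have : P.mulVecLin (P.mulVecLin w) = P.mulVecLin w := by
    simp only [Matrix.mulVecLin_apply, Matrix.mulVec_mulVec, hP2]
  simpa [hw, Matrix.mulVecLin_apply] using this

end Helpers

set_option maxHeartbeats 1000000 in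
/-- With `ξ := A₁†b₁ + (I − (A₁(I − A₂†A₂))†A₁)(A₂†b₂ − A₁†b₁)` and
`ψ(y) := ξ + P_{N(A₁)∩N(A₂)} y` (orthogonal projection), `ψ(y)` is a minimizer of
`‖A₁x − b₁‖²` subject to `A₂x = b₂`, and `‖ψ(y) − y‖ ≤ ‖x − y‖` for every minimizer `x`. -/
theorem stmt19 {m n k : ℕ}
    (A₁ : Matrix (Fin m) (Fin n) ℂ) (b₁ : EuclideanSpace ℂ (Fin m))
    (A₂ : Matrix (Fin k) (Fin n) ℂ) (b₂ : EuclideanSpace ℂ (Fin k))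
    (hk : 1 ≤ k) (hA₂ : A₂.rank = k)
    (A₁d : Matrix (Fin n) (Fin m) ℂ) (hA₁d : IsMoorePenrose A₁ A₁d)
    (A₂d : Matrix (Fin n) (Fin k) ℂ) (hA₂d : IsMoorePenrose A₂ A₂d)
    (G : Matrix (Fin n) (Fin m) ℂ) (hG : IsMoorePenrose (A₁ * (1 - A₂d * A₂)) G)
    (ξ : EuclideanSpace ℂ (Fin n))
    (hξ : ξ = Matrix.toEuclideanLin A₁d b₁ +
      Matrix.toEuclideanLin (1 - G * A₁)
        (Matrix.toEuclideanLin A₂d b₂ - Matrix.toEuclideanLin A₁d b₁))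
    (y ψy : EuclideanSpace ℂ (Fin n))
    (hψy : ψy = ξ + (Submodule.orthogonalProjection (mker A₁ ⊓ mker A₂) y :
      EuclideanSpace ℂ (Fin n))) :
    Matrix.toEuclideanLin A₂ ψy = b₂ ∧
      (∀ x : EuclideanSpace ℂ (Fin n), Matrix.toEuclideanLin A₂ x = b₂ →
        ‖Matrix.toEuclideanLin A₁ ψy - b₁‖ ^ 2 ≤ ‖Matrix.toEuclideanLin A₁ x - b₁‖ ^ 2) ∧
      ∀ x : EuclideanSpace ℂ (Fin n), Matrix.toEuclideanLin A₂ x = b₂ →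
        (∀ x' : EuclideanSpace ℂ (Fin n), Matrix.toEuclideanLin A₂ x' = b₂ →
          ‖Matrix.toEuclideanLin A₁ x - b₁‖ ^ 2 ≤ ‖Matrix.toEuclideanLin A₁ x' - b₁‖ ^ 2) →
        ‖ψy - y‖ ≤ ‖x - y‖ := by
  have hA₂d' := hA₂d
  set B := A₁ * (1 - A₂d * A₂) with hB
  obtain ⟨h11, h12, h13, h14⟩ := hA₁d
  obtain ⟨h21, h22, h23, h24⟩ := hA₂d
  obtain ⟨hg1, hg2, hg3, hg4⟩ := hG
  -- matrix identities
  have hBH : Bᴴ = (1 - A₂d * A₂) * A₁ᴴ := by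
    rw [hB, conjTranspose_mul, conjTranspose_sub, conjTranspose_one, h24]
  have hA2z : A₂ * (1 - A₂d * A₂) = 0 := by
    rw [Matrix.mul_sub, Matrix.mul_one, ← Matrix.mul_assoc, h21, sub_self]
  have hA2G : A₂ * G = 0 := by
    calc A₂ * G = A₂ * (G * B * G) := by rw [hg2]
    _ = A₂ * ((G * B)ᴴ * G) := by rw [hg4]
    _ = A₂ * (1 - A₂d * A₂) * (A₁ᴴ * (Gᴴ * G)) := by
        rw [conjTranspose_mul, hBH]; simp [Matrix.mul_assoc]
    _ = 0 := by rw [hA2z, Matrix.zero_mul]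
  have hA1G : A₁ * G = B * G := by
    rw [hB, Matrix.mul_sub, Matrix.mul_one, Matrix.sub_mul, Matrix.mul_assoc A₁,
      Matrix.mul_assoc A₂d, hA2G, Matrix.mul_zero, Matrix.mul_zero, sub_zero]
  have hA1H : A₁ᴴ * (A₁ * A₁d) = A₁ᴴ := by
    rw [← h13, ← conjTranspose_mul, h11]
  have hBGA : B * G * (A₁ * A₁d) = B * G := by
    calc B * G * (A₁ * A₁d) = (B * G)ᴴ * (A₁ * A₁d) := by rw [hg3]
    _ = Gᴴ * ((1 - A₂d * A₂) * (A₁ᴴ * (A₁ * A₁d))) := by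
        rw [conjTranspose_mul, hBH]; simp [Matrix.mul_assoc]
    _ = Gᴴ * ((1 - A₂d * A₂) * A₁ᴴ) := by rw [hA1H]
    _ = (B * G)ᴴ := by rw [conjTranspose_mul, hBH]
    _ = B * G := hg3
  have hM5 : Bᴴ * (B * G) = Bᴴ := by
    rw [← hg3, ← conjTranspose_mul, hg1]
  have hGH : Gᴴ = Gᴴ * (G * B) := by
    conv_lhs => rw [← hg2]
    rw [conjTranspose_mul, hg4]
  have hM7 : A₂dᴴ = A₂dᴴ * (A₂d * A₂) := by
    conv_lhs => rw [← h22]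
    rw [conjTranspose_mul, h24]
  have hM8 : A₁dᴴ = A₁dᴴ * (A₁d * A₁) := by
    conv_lhs => rw [← h12]
    rw [conjTranspose_mul, h14]
  -- surjectivity of A₂
  have hsur : ∀ v : EuclideanSpace ℂ (Fin k),
      Matrix.toEuclideanLin A₂ (Matrix.toEuclideanLin A₂d v) = v := by
    intro v
    rw [← Tmul, Matrix.toEuclideanLin_apply, surj_lemma A₂ A₂d hA₂d' hA₂]
  -- vanishing of B on ker A₂
  have hTB : ∀ v : EuclideanSpace ℂ (Fin n), Matrix.toEuclideanLin A₂ v = 0 →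
      Matrix.toEuclideanLin B v = Matrix.toEuclideanLin A₁ v := by
    intro v hv
    rw [hB, Tmul A₁ (1 - A₂d * A₂) v, Tsub, Tone, Tmul A₂d A₂ v, hv, map_zero, sub_zero]
  -- subspace S and projection
  set S := mker A₁ ⊓ mker A₂ with hS
  set s₀ : EuclideanSpace ℂ (Fin n) := (Submodule.orthogonalProjection S y : EuclideanSpace ℂ (Fin n))
    with hs₀
  have hs₀S : s₀ ∈ S := SetLike.coe_mem _
  have hs₀1 : Matrix.toEuclideanLin A₁ s₀ = 0 := (Submodule.mem_inf.mp hs₀S).1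
  have hs₀2 : Matrix.toEuclideanLin A₂ s₀ = 0 := (Submodule.mem_inf.mp hs₀S).2
  -- abbreviations
  set d := Matrix.toEuclideanLin A₂d b₂ - Matrix.toEuclideanLin A₁d b₁ with hd
  set c := b₁ - Matrix.toEuclideanLin (A₁ * A₂d) b₂ with hc
  -- ξ satisfies the constraint
  have hA2ξ : Matrix.toEuclideanLin A₂ ξ = b₂ := by
    have e1 : A₂ * (1 - G * A₁) = A₂ := by
      rw [Matrix.mul_sub, Matrix.mul_one, ← Matrix.mul_assoc, hA2G, Matrix.zero_mul, sub_zero]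
    rw [hξ, map_add, ← Tmul A₂ (1 - G * A₁) d, e1, hd, map_sub, hsur]
    abel
  have hA2ψ : Matrix.toEuclideanLin A₂ ψy = b₂ := by
    rw [hψy, map_add, hA2ξ, hs₀2, add_zero]
  -- residual identity for ξ
  have hTd : Matrix.toEuclideanLin A₁ d =
      Matrix.toEuclideanLin (A₁ * A₂d) b₂ - Matrix.toEuclideanLin (A₁ * A₁d) b₁ := by
    rw [hd, map_sub, ← Tmul, ← Tmul]
  have hres : Matrix.toEuclideanLin A₁ ξ - b₁ = Matrix.toEuclideanLin (B * G) c - c := by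
    have e2 : A₁ * (1 - G * A₁) = A₁ - B * G * A₁ := by
      rw [Matrix.mul_sub, Matrix.mul_one, ← Matrix.mul_assoc, hA1G]
    rw [hξ, map_add, ← Tmul A₁ (1 - G * A₁) d, e2, Tsub, Tmul (B * G) A₁ d, hTd]
    simp only [map_sub]
    rw [← Tmul (B * G) (A₁ * A₁d) b₁, hBGA, ← Tmul A₁ A₁d b₁, hc]
    simp only [map_sub]
    abel
  -- decomposition of the objective for any feasible x
  have decomp : ∀ x : EuclideanSpace ℂ (Fin n), Matrix.toEuclideanLin A₂ x = b₂ →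
      ∃ u : EuclideanSpace ℂ (Fin n),
        Matrix.toEuclideanLin A₁ x - b₁ =
          Matrix.toEuclideanLin B u + (Matrix.toEuclideanLin (B * G) c - c) ∧
        ‖Matrix.toEuclideanLin A₁ x - b₁‖ ^ 2 =
          ‖Matrix.toEuclideanLin B u‖ ^ 2 + ‖Matrix.toEuclideanLin (B * G) c - c‖ ^ 2 := by
    intro x hx
    set w := x - Matrix.toEuclideanLin A₂d b₂ with hw
    have hA2w : Matrix.toEuclideanLin A₂ w = 0 := by
      rw [hw, map_sub, hx, hsur, sub_self]
    refine ⟨w - Matrix.toEuclideanLin G c, ?_, ?_⟩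
    · rw [map_sub (Matrix.toEuclideanLin B), ← Tmul B G c, hTB w hA2w, hw,
        map_sub (Matrix.toEuclideanLin A₁), ← Tmul A₁ A₂d b₂, hc]
      simp only [map_sub]
      abel
    · have horth : (inner ℂ (Matrix.toEuclideanLin B (w - Matrix.toEuclideanLin G c))
          (Matrix.toEuclideanLin (B * G) c - c) : ℂ) = 0 := by
        rw [Tinner]
        have : Matrix.toEuclideanLin Bᴴ (Matrix.toEuclideanLin (B * G) c - c) = 0 := by
          rw [map_sub, ← Tmul, hM5, sub_self]
        rw [this, inner_zero_right]
      have h1 : Matrix.toEuclideanLin A₁ x - b₁ =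
          Matrix.toEuclideanLin B (w - Matrix.toEuclideanLin G c) +
            (Matrix.toEuclideanLin (B * G) c - c) := by
        rw [map_sub (Matrix.toEuclideanLin B), ← Tmul B G c, hTB w hA2w, hw,
          map_sub (Matrix.toEuclideanLin A₁), ← Tmul A₁ A₂d b₂, hc]
        simp only [map_sub]
        abel
      rw [h1]
      simpa [pow_two] using
        norm_add_sq_eq_norm_sq_add_norm_sq_of_inner_eq_zero _ _ horth
  -- objective value at ψy equals that at ξ
  have hA1ψ : Matrix.toEuclideanLin A₁ ψy = Matrix.toEuclideanLin A₁ ξ := by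
    rw [hψy, map_add, hs₀1, add_zero]
  refine ⟨hA2ψ, ?_, ?_⟩
  · intro x hx
    obtain ⟨u, _, hu2⟩ := decomp x hx
    rw [hA1ψ, hres, hu2]
    linarith [sq_nonneg ‖Matrix.toEuclideanLin B u‖]
  · intro x hx hmin
    obtain ⟨u, hu1, hu2⟩ := decomp x hx
    have hle : ‖Matrix.toEuclideanLin A₁ x - b₁‖ ^ 2 ≤
        ‖Matrix.toEuclideanLin A₁ ξ - b₁‖ ^ 2 := hmin ξ hA2ξ
    rw [hres] at hle
    have hBu0 : Matrix.toEuclideanLin B u = 0 := by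
      have hb2 : ‖Matrix.toEuclideanLin B u‖ ^ 2 ≤ 0 := by linarith [hu2, hle]
      have hb0 : ‖Matrix.toEuclideanLin B u‖ ^ 2 = 0 :=
        le_antisymm hb2 (sq_nonneg _)
      have hn : ‖Matrix.toEuclideanLin B u‖ = 0 := by
        exact pow_eq_zero_iff two_ne_zero |>.mp hb0
      exact norm_eq_zero.mp hn
    have hxξ1 : Matrix.toEuclideanLin A₁ (x - ξ) = 0 := by
      have : Matrix.toEuclideanLin A₁ x - b₁ = Matrix.toEuclideanLin A₁ ξ - b₁ := by
        rw [hu1, hBu0, zero_add, hres]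
      rw [map_sub, sub_eq_zero]
      have := sub_left_inj.mp this
      exact this
    have hxξ2 : Matrix.toEuclideanLin A₂ (x - ξ) = 0 := by
      rw [map_sub, hx, hA2ξ, sub_self]
    have hxS : x - ξ ∈ S := Submodule.mem_inf.mpr ⟨hxξ1, hxξ2⟩
    -- ξ is orthogonal to S
    have hξperp : ξ ∈ Sᗮ := by
      rw [Submodule.mem_orthogonal]
      intro v hv
      have hv1 : Matrix.toEuclideanLin A₁ v = 0 := (Submodule.mem_inf.mp hv).1
      have hv2 : Matrix.toEuclideanLin A₂ v = 0 := (Submodule.mem_inf.mp hv).2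
      have hvB : Matrix.toEuclideanLin B v = 0 := by rw [hTB v hv2, hv1]
      have hA1d0 : Matrix.toEuclideanLin A₁dᴴ v = 0 := by
        conv_lhs => rw [hM8]
        rw [Tmul, Tmul, hv1, map_zero, map_zero]
      have hA2d0 : Matrix.toEuclideanLin A₂dᴴ v = 0 := by
        conv_lhs => rw [hM7]
        rw [Tmul, Tmul, hv2, map_zero, map_zero]
      have hG0 : Matrix.toEuclideanLin Gᴴ v = 0 := by
        conv_lhs => rw [hGH]
        rw [Tmul, Tmul, hvB, map_zero, map_zero]
      rw [hξ, inner_add_right, Tinner' A₁d b₁ v, hA1d0, inner_zero_left, zero_add,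
        Tinner' (1 - G * A₁) d v]
      have hct : Matrix.toEuclideanLin (1 - G * A₁)ᴴ v = v - Matrix.toEuclideanLin A₁ᴴ
          (Matrix.toEuclideanLin Gᴴ v) := by
        rw [conjTranspose_sub, conjTranspose_one, conjTranspose_mul, Tsub, Tone, Tmul]
      rw [hct, hG0, map_zero, sub_zero, hd, inner_sub_right, Tinner' A₂d b₂ v, hA2d0,
        inner_zero_left, Tinner' A₁d b₁ v, hA1d0, inner_zero_left, sub_self]
    -- final comparison
    have h1 : ψy - y ∈ Sᗮ := by
      have he : ψy - y = ξ - (y - s₀) := by rw [hψy]; abel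
      rw [he]
      exact Submodule.sub_mem _ hξperp (Submodule.sub_starProjection_mem_orthogonal (K := S) y)
    have h2 : (x - ξ) - s₀ ∈ S := Submodule.sub_mem _ hxS hs₀S
    have h3 : x - y = (ψy - y) + ((x - ξ) - s₀) := by rw [hψy]; abel
    have h4 : (inner ℂ (ψy - y) ((x - ξ) - s₀) : ℂ) = 0 :=
      Submodule.inner_left_of_mem_orthogonal h2 h1
    have h5 : ‖x - y‖ ^ 2 = ‖ψy - y‖ ^ 2 + ‖(x - ξ) - s₀‖ ^ 2 := by
      rw [h3]
      simpa [pow_two] using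
        norm_add_sq_eq_norm_sq_add_norm_sq_of_inner_eq_zero _ _ h4
    have h6 : ‖ψy - y‖ ^ 2 ≤ ‖x - y‖ ^ 2 := by
      rw [h5]; linarith [sq_nonneg ‖(x - ξ) - s₀‖]
    calc ‖ψy - y‖ = Real.sqrt (‖ψy - y‖ ^ 2) := (Real.sqrt_sq (norm_nonneg _)).symm
    _ ≤ Real.sqrt (‖x - y‖ ^ 2) := Real.sqrt_le_sqrt h6
    _ = ‖x - y‖ := Real.sqrt_sq (norm_nonneg _)
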